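/- Let α be an exponent sequence. Then the forward shift operator F is Cesàro bounded on Λ_1(α): for every θ ∈ Λ_1(α), every positive integer k, and every positive integer n, ∑_{j=0}^∞ | (1/n) ∑_{m=1}^{n} θ̃_{j-m} | · e^{-α_j/k} ≤ ∑_{j=0}^∞ |θ_j| · e^{-α_j/(2k)}, where θ̃_i := θ_i for i ≥ 0 and θ̃_i := 0 for i < 0 (so the k-th seminorm of every Cesàro mean F^{[n]}θ is bounded by the 2k-th seminorm of θ, uniformly in n). -/
import Mathlib


/-- The forward shift operator is Cesàro bounded on `Λ_1(α)`: the `k`-th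
seminorm of every Cesàro mean `F^{[n]} θ` is bounded by the `2k`-th seminorm of `θ`,
uniformly in `n`.  Here `θ̃_{j-m}` is taken to be `0` when `m > j`. -/
theorem forward_shift_cesaro_bounded
    (α : ℕ → ℝ)
    (hα_nonneg : ∀ n, 0 ≤ α n) (hα_mono : Monotone α)
    (hα_tendsto : Filter.Tendsto α Filter.atTop Filter.atTop) :
    ∀ θ : ℕ → ℂ,
      (∀ k : ℕ, 0 < k → Summable fun n : ℕ => ‖θ n‖ * Real.exp (-α n / (k : ℝ))) →
      ∀ k : ℕ, 0 < k → ∀ n : ℕ, 0 < n →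
        (∑' j : ℕ, ‖(n : ℂ)⁻¹ * ∑ m ∈ Finset.Icc 1 n, (if m ≤ j then θ (j - m) else 0)‖ *
            Real.exp (-α j / (k : ℝ))) ≤
          ∑' j : ℕ, ‖θ j‖ * Real.exp (-α j / ((2 * k : ℕ) : ℝ)) := by
  intro θ hθ k hk n hn
  set u : ℕ → ℝ := fun i => ‖θ i‖ * Real.exp (-α i / ((2 * k : ℕ) : ℝ)) with hu
  have hu_summable : Summable u := hθ (2 * k) (by omega)
  set g : ℕ → ℕ → ℝ := fun m j => if m ≤ j then u (j - m) else 0 with hg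
  -- g m is summable with sum = ∑' u
  have hg_zero : ∀ m : ℕ, ∀ j ∉ Set.range (fun i => i + m), g m j = 0 := by
    intro m j hj
    simp only [hg]
    rw [if_neg]
    intro hle
    exact hj ⟨j - m, by simp; omega⟩
  have hinj : ∀ m : ℕ, Function.Injective (fun i : ℕ => i + m) := fun m a b h => by
    simpa using h
  have hg_comp : ∀ m : ℕ, (fun i => g m (i + m)) = u := by
    intro m
    funext i
    simp [hg]
  have hsupp : ∀ m : ℕ, Function.support (g m) ⊆ Set.range (fun i : ℕ => i + m) := by
    intro m j hj
    by_contra hc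
    exact hj (hg_zero m j hc)
  have hcomp : ∀ m : ℕ, (g m ∘ fun i : ℕ => i + m) = u := by
    intro m; funext i; simp [Function.comp, hg]
  have hg_summable : ∀ m : ℕ, Summable (g m) := by
    intro m
    rw [← (hinj m).summable_iff (fun j hj => hg_zero m j hj)]
    rw [show (g m ∘ fun i : ℕ => i + m) = u from hcomp m]
    exact hu_summable
  have hg_tsum : ∀ m : ℕ, ∑' j, g m j = ∑' i, u i := by
    intro m
    rw [← (hinj m).tsum_eq (hsupp m)]
    exact tsum_congr fun i => by simp [hg]
  -- the pointwise bound
  set h : ℕ → ℝ := fun j => (n : ℝ)⁻¹ * ∑ m ∈ Finset.Icc 1 n, g m j with hh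
  have hpw : ∀ j : ℕ,
      ‖(n : ℂ)⁻¹ * ∑ m ∈ Finset.Icc 1 n, (if m ≤ j then θ (j - m) else 0)‖ *
        Real.exp (-α j / (k : ℝ)) ≤ h j := by
    intro j
    rw [norm_mul]
    have h1 : ‖((n : ℂ))⁻¹‖ = (n : ℝ)⁻¹ := by
      simp
    rw [h1, mul_assoc]
    apply mul_le_mul_of_nonneg_left _ (by positivity)
    calc ‖∑ m ∈ Finset.Icc 1 n, (if m ≤ j then θ (j - m) else 0)‖ * Real.exp (-α j / (k : ℝ))
        ≤ (∑ m ∈ Finset.Icc 1 n, ‖(if m ≤ j then θ (j - m) else 0)‖) *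
            Real.exp (-α j / (k : ℝ)) := by
          apply mul_le_mul_of_nonneg_right (norm_sum_le _ _) (Real.exp_pos _).le
      _ = ∑ m ∈ Finset.Icc 1 n, ‖(if m ≤ j then θ (j - m) else 0)‖ *
            Real.exp (-α j / (k : ℝ)) := by rw [Finset.sum_mul]
      _ ≤ ∑ m ∈ Finset.Icc 1 n, g m j := by
          apply Finset.sum_le_sum
          intro m _
          by_cases hm : m ≤ j
          · simp only [hg, if_pos hm]
            apply mul_le_mul_of_nonneg_left _ (norm_nonneg _)
            apply Real.exp_le_exp.2
            have h2 : α (j - m) ≤ α j := hα_mono (by omega)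
            have h3 : (0:ℝ) < k := by exact_mod_cast hk
            have h4 : (0:ℝ) < ((2 * k : ℕ) : ℝ) := by positivity
            have h5 : ((k:ℝ)) ≤ ((2 * k : ℕ) : ℝ) := by
              push_cast; nlinarith
            have h6 : 0 ≤ α (j - m) := hα_nonneg _
            rw [div_le_div_iff₀ h3 h4]
            nlinarith
          · simp [hg, if_neg hm]
  have hh_summable : Summable h := by
    apply Summable.mul_left
    exact summable_sum fun m _ => hg_summable m
  have hf_summable : Summable (fun j : ℕ =>
      ‖(n : ℂ)⁻¹ * ∑ m ∈ Finset.Icc 1 n, (if m ≤ j then θ (j - m) else 0)‖ *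
        Real.exp (-α j / (k : ℝ))) := by
    apply Summable.of_nonneg_of_le (fun j => by positivity) hpw hh_summable
  calc (∑' j : ℕ, ‖(n : ℂ)⁻¹ * ∑ m ∈ Finset.Icc 1 n, (if m ≤ j then θ (j - m) else 0)‖ *
          Real.exp (-α j / (k : ℝ)))
      ≤ ∑' j, h j := Summable.tsum_le_tsum hpw hf_summable hh_summable
    _ = (n : ℝ)⁻¹ * ∑' j, ∑ m ∈ Finset.Icc 1 n, g m j := tsum_mul_left
    _ = (n : ℝ)⁻¹ * ∑ m ∈ Finset.Icc 1 n, ∑' j, g m j := by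
        rw [Summable.tsum_finsetSum fun m _ => hg_summable m]
    _ = (n : ℝ)⁻¹ * ∑ m ∈ Finset.Icc 1 n, ∑' i, u i := by
        rw [Finset.sum_congr rfl fun m _ => hg_tsum m]
    _ = (n : ℝ)⁻¹ * (n * ∑' i, u i) := by
        rw [Finset.sum_const, Nat.card_Icc]
        simp [nsmul_eq_mul]
    _ = ∑' i, u i := by
        field_simp
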